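/- Let x₁, x₂, x₃, x₄ : ℝ → ℝ be four solutions of the Riccati equation dx/dt = a₀(t) + a₁(t)x + a₂(t)x², pairwise distinct at each time. Then the cross-ratio F(t) = (x₁(t)−x₄(t))(x₂(t)−x₃(t)) / ((x₁(t)−x₂(t))(x₃(t)−x₄(t))) is constant in t (its derivative vanishes identically). -/

import Mathlib

/-- the cross-ratio of four pairwise distinct solutions of a Riccati
equation is constant in time. -/
theorem riccati_crossratio_constant
    (a₀ a₁ a₂ : ℝ → ℝ) (ha₀ : Continuous a₀) (ha₁ : Continuous a₁) (ha₂ : Continuous a₂)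
    (x₁ x₂ x₃ x₄ : ℝ → ℝ)
    (hx₁ : ∀ t, HasDerivAt x₁ (a₀ t + a₁ t * x₁ t + a₂ t * (x₁ t) ^ 2) t)
    (hx₂ : ∀ t, HasDerivAt x₂ (a₀ t + a₁ t * x₂ t + a₂ t * (x₂ t) ^ 2) t)
    (hx₃ : ∀ t, HasDerivAt x₃ (a₀ t + a₁ t * x₃ t + a₂ t * (x₃ t) ^ 2) t)
    (hx₄ : ∀ t, HasDerivAt x₄ (a₀ t + a₁ t * x₄ t + a₂ t * (x₄ t) ^ 2) t)
    (hdist : ∀ t, x₁ t ≠ x₂ t ∧ x₁ t ≠ x₃ t ∧ x₁ t ≠ x₄ t ∧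
      x₂ t ≠ x₃ t ∧ x₂ t ≠ x₄ t ∧ x₃ t ≠ x₄ t)
    (F : ℝ → ℝ)
    (hF : ∀ t, F t = (x₁ t - x₄ t) * (x₂ t - x₃ t) /
        ((x₁ t - x₂ t) * (x₃ t - x₄ t))) :
    ∀ t, HasDerivAt F 0 t := by
  intro t
  obtain ⟨h12, h13, h14, h23, h24, h34⟩ := hdist t
  have hN : HasDerivAt (fun s => (x₁ s - x₄ s) * (x₂ s - x₃ s))
      (((a₀ t + a₁ t * x₁ t + a₂ t * (x₁ t) ^ 2) - (a₀ t + a₁ t * x₄ t + a₂ t * (x₄ t) ^ 2)) * (x₂ t - x₃ t)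
        + (x₁ t - x₄ t) * ((a₀ t + a₁ t * x₂ t + a₂ t * (x₂ t) ^ 2) - (a₀ t + a₁ t * x₃ t + a₂ t * (x₃ t) ^ 2))) t :=
    ((hx₁ t).sub (hx₄ t)).mul ((hx₂ t).sub (hx₃ t))
  have hD : HasDerivAt (fun s => (x₁ s - x₂ s) * (x₃ s - x₄ s))
      (((a₀ t + a₁ t * x₁ t + a₂ t * (x₁ t) ^ 2) - (a₀ t + a₁ t * x₂ t + a₂ t * (x₂ t) ^ 2)) * (x₃ t - x₄ t)
        + (x₁ t - x₂ t) * ((a₀ t + a₁ t * x₃ t + a₂ t * (x₃ t) ^ 2) - (a₀ t + a₁ t * x₄ t + a₂ t * (x₄ t) ^ 2))) t :=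
    ((hx₁ t).sub (hx₂ t)).mul ((hx₃ t).sub (hx₄ t))
  have hDne : (x₁ t - x₂ t) * (x₃ t - x₄ t) ≠ 0 :=
    mul_ne_zero (sub_ne_zero.mpr h12) (sub_ne_zero.mpr h34)
  have hq := hN.div hD hDne
  have hFeq : F = fun s => (x₁ s - x₄ s) * (x₂ s - x₃ s) / ((x₁ s - x₂ s) * (x₃ s - x₄ s)) :=
    funext hF
  rw [hFeq]
  refine hq.congr_deriv (Eq.symm ?_)
  rw [eq_div_iff (pow_ne_zero 2 hDne)]
  ring
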